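/- Let X be a real vector space, p₁, …, p_N : X → ℝ polyhedral (finitely generated) sublinear functionals, p : X → ℝ a sublinear functional, and u₁, …, u_N, v ∈ ℝ such that the system p_k(x) ≤ u_k (k = 1, …, N) is consistent. Then {x : p x ≥ v} ⊇ ⋂_{k=1}^N {x : p_k x ≤ u_k} if and only if there exist α₁, …, α_N ≥ 0 such that p(x) + ∑_{k=1}^N α_k p_k(x) ≥ 0 for all x ∈ X and ∑_{k=1}^N α_k u_k ≤ −v. -/

import Mathlib

open Finset Set
open scoped RealInnerProductSpace

section Cone

variable {ι : Type*} [Fintype ι] {H : Type*} [NormedAddCommGroup H] [InnerProductSpace ℝ H]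
  [FiniteDimensional ℝ H]

/-- Carathéodory-type lemma for cones: a nonneg combination supported in `s` can be rewritten
as a nonneg combination supported on a finset on which `g` is linearly independent. -/
lemma cone_caratheodory [DecidableEq ι] (g : ι → H) :
    ∀ (n : ℕ) (s : Finset ι) (β : ι → ℝ), s.card ≤ n → (∀ i, 0 ≤ β i) → (∀ i ∉ s, β i = 0) →
    ∃ (t : Finset ι) (β' : ι → ℝ), (∀ i, 0 ≤ β' i) ∧ (∀ i ∉ t, β' i = 0) ∧
      LinearIndependent ℝ (fun i : ↥t => g i) ∧ ∑ i, β' i • g i = ∑ i, β i • g i := by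
  intro n
  induction n with
  | zero =>
    intro s β hcard hβ hsupp
    refine ⟨∅, β, hβ, ?_, ?_, rfl⟩
    · intro i _
      exact hsupp i (by simp [Finset.card_eq_zero.mp (Nat.le_zero.mp hcard)])
    · have : IsEmpty ((∅ : Finset ι) : Set ι) := by simp
      exact linearIndependent_empty_type
  | succ n ih =>
    intro s β hcard hβ hsupp
    by_cases hind : LinearIndependent ℝ (fun i : ↥s => g i)
    · exact ⟨s, β, hβ, hsupp, hind, rfl⟩
    · obtain ⟨γ, hγsum, iγ, hiγ⟩ := Fintype.not_linearIndependent_iff.mp hind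
      -- extend γ by zero, choosing the sign so that some entry is positive
      have hsign : ∃ ε : ℝ, (ε = 1 ∨ ε = -1) ∧ 0 < ε * γ iγ := by
        rcases lt_or_gt_of_ne hiγ with h | h
        · exact ⟨-1, Or.inr rfl, by nlinarith⟩
        · exact ⟨1, Or.inl rfl, by nlinarith⟩
      obtain ⟨ε, hε1, hεpos⟩ := hsign
      set γ' : ι → ℝ := fun i => if h : i ∈ s then ε * γ ⟨i, h⟩ else 0 with hγ'
      have hγ'sum : ∑ i, γ' i • g i = 0 := by
        have h1 : ∑ i, γ' i • g i = ∑ i ∈ s, γ' i • g i := by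
          refine (Finset.sum_subset (Finset.subset_univ s) ?_).symm
          intro i _ hi
          simp [hγ', hi]
        rw [h1, ← Finset.sum_attach s (fun i => γ' i • g i)]
        have h2 : ∀ i : ↥s, γ' ↑i • g ↑i = ε • (γ i • g ↑i) := by
          intro i
          simp [hγ', i.2, mul_smul]
        rw [Finset.sum_congr rfl (fun i _ => h2 i), ← Finset.smul_sum]
        rw [Finset.univ_eq_attach] at hγsum
        rw [hγsum, smul_zero]
      have hγ'supp : ∀ i ∉ s, γ' i = 0 := by intro i hi; simp [hγ', hi]
      -- the set of indices with positive γ'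
      have hne : (s.filter (fun i => 0 < γ' i)).Nonempty := by
        refine ⟨iγ, Finset.mem_filter.mpr ⟨iγ.2, ?_⟩⟩
        simp only [hγ', dif_pos iγ.2]
        simpa using hεpos
      obtain ⟨i₀, hi₀mem, hi₀min⟩ :=
        Finset.exists_min_image (s.filter (fun i => 0 < γ' i)) (fun i => β i / γ' i) hne
      have hi₀s : i₀ ∈ s := (Finset.mem_filter.mp hi₀mem).1
      have hi₀pos : 0 < γ' i₀ := (Finset.mem_filter.mp hi₀mem).2
      set τ : ℝ := β i₀ / γ' i₀ with hτ
      have hτ0 : 0 ≤ τ := div_nonneg (hβ i₀) hi₀pos.le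
      set β' : ι → ℝ := fun i => β i - τ * γ' i with hβ'def
      have hβ'nonneg : ∀ i, 0 ≤ β' i := by
        intro i
        by_cases hpos : 0 < γ' i
        · have hi : i ∈ s := by
            by_contra hi
            rw [hγ'supp i hi] at hpos; exact lt_irrefl 0 hpos
          have := hi₀min i (Finset.mem_filter.mpr ⟨hi, hpos⟩)
          have : τ * γ' i ≤ β i := by
            rw [hτ]
            calc β i₀ / γ' i₀ * γ' i ≤ β i / γ' i * γ' i := by
                  apply mul_le_mul_of_nonneg_right this hpos.le
              _ = β i := by field_simp
          simp [hβ'def]; linarith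
        · push_neg at hpos
          have : τ * γ' i ≤ 0 := mul_nonpos_of_nonneg_of_nonpos hτ0 hpos
          simp [hβ'def]; nlinarith [hβ i]
      have hβ'supp : ∀ i ∉ s.erase i₀, β' i = 0 := by
        intro i hi
        rw [Finset.mem_erase] at hi
        push_neg at hi
        by_cases h : i = i₀
        · subst h
          simp only [hβ'def, hτ]
          field_simp
          ring
        · have hns : i ∉ s := hi h
          simp [hβ'def, hsupp i hns, hγ'supp i hns]
      have hsum' : ∑ i, β' i • g i = ∑ i, β i • g i := by
        simp only [hβ'def, sub_smul, mul_smul, Finset.sum_sub_distrib]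
        rw [← Finset.smul_sum, hγ'sum, smul_zero, sub_zero]
      have hcard' : (s.erase i₀).card ≤ n := by
        have := Finset.card_erase_of_mem hi₀s
        omega
      obtain ⟨t, β'', h1, h2, h3, h4⟩ := ih (s.erase i₀) β' hcard' hβ'nonneg hβ'supp
      exact ⟨t, β'', h1, h2, h3, h4.trans hsum'⟩

/-- The finitely generated cone as a set. -/
def coneOf (g : ι → H) : Set H := {x | ∃ β : ι → ℝ, (∀ i, 0 ≤ β i) ∧ x = ∑ i, β i • g i}

lemma isClosed_coneOf (g : ι → H) : IsClosed (coneOf g) := by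
  classical
  -- the cone is the finite union over linearly independent sub-families
  have key : coneOf g = ⋃ t : {t : Finset ι // LinearIndependent ℝ (fun i : ↥t => g i)},
      (fun β : (↥(t : Finset ι) → ℝ) => ∑ i, β i • g ↑i) '' {β | ∀ i, 0 ≤ β i} := by
    ext x
    constructor
    · rintro ⟨β, hβ, rfl⟩
      obtain ⟨t, β', h1, h2, h3, h4⟩ :=
        cone_caratheodory g (Finset.univ.card) Finset.univ β le_rfl hβ (by simp)
      refine Set.mem_iUnion.mpr ⟨⟨t, h3⟩, fun i : ↥t => β' ↑i, fun i => h1 ↑i, ?_⟩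
      show (∑ i : ↥t, β' ↑i • g ↑i) = _
      rw [Finset.univ_eq_attach, Finset.sum_attach t (fun i => β' i • g i), ← h4]
      exact Finset.sum_subset (Finset.subset_univ t) (fun i _ hi => by simp [h2 i hi])
    · rintro hx
      obtain ⟨t, β, hβ, rfl⟩ := Set.mem_iUnion.mp hx
      refine ⟨fun i => if h : i ∈ (t : Finset ι) then β ⟨i, h⟩ else 0, ?_, ?_⟩
      · intro i
        by_cases h : i ∈ (t : Finset ι) <;> simp [h]
        · exact hβ _
      · rw [show (∑ i, (if h : i ∈ (t : Finset ι) then β ⟨i, h⟩ else 0) • g i)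
            = ∑ i ∈ (t : Finset ι), (if h : i ∈ (t : Finset ι) then β ⟨i, h⟩ else 0) • g i from
            (Finset.sum_subset (Finset.subset_univ _) (by intro i _ hi; simp [hi])).symm]
        rw [← Finset.sum_attach (t : Finset ι)
          (fun i => (if h : i ∈ (t : Finset ι) then β ⟨i, h⟩ else 0) • g i)]
        rw [← Finset.univ_eq_attach]
        refine Finset.sum_congr rfl ?_
        intro i _
        simp [i.2]
  rw [key]
  apply isClosed_iUnion_of_finite
  rintro ⟨t, ht⟩
  -- image of the closed orthant under an injective linear map
  let φ : (↥t → ℝ) →ₗ[ℝ] H :=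
    { toFun := fun β => ∑ i, β i • g ↑i
      map_add' := by
        intro a b
        simp [add_smul, Finset.sum_add_distrib]
      map_smul' := by
        intro c a
        simp [mul_smul, Finset.smul_sum] }
  have hker : LinearMap.ker φ = ⊥ := by
    rw [LinearMap.ker_eq_bot']
    intro m hm
    funext i
    exact Fintype.linearIndependent_iff.mp ht m hm i
  have hclosed : Topology.IsClosedEmbedding φ := LinearMap.isClosedEmbedding_of_injective hker
  have horth : IsClosed {β : ↥t → ℝ | ∀ i, 0 ≤ β i} := by
    have : {β : ↥t → ℝ | ∀ i, 0 ≤ β i} = ⋂ i, {β : ↥t → ℝ | 0 ≤ β i} := by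
      ext β; simp [Set.mem_iInter]
    rw [this]
    exact isClosed_iInter fun i => isClosed_le continuous_const (continuous_apply i)
  exact hclosed.isClosedMap _ horth

/-- Farkas-type membership: if `⟪c, y⟫ ≥ 0` whenever `⟪g i, y⟫ ≥ 0` for all `i`,
then `c` is a nonnegative combination of the `g i`. -/
lemma mem_coneOf_of_dual [CompleteSpace H] (g : ι → H) (c : H)
    (h : ∀ y : H, (∀ i, 0 ≤ ⟪g i, y⟫) → 0 ≤ ⟪c, y⟫) :
    ∃ β : ι → ℝ, (∀ i, 0 ≤ β i) ∧ c = ∑ i, β i • g i := by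
  classical
  let K : ConvexCone ℝ H :=
    { carrier := coneOf g
      smul_mem' := by
        rintro a ha x ⟨β, hβ, rfl⟩
        exact ⟨fun i => a * β i, fun i => mul_nonneg ha.le (hβ i),
          by simp [Finset.smul_sum, mul_smul]⟩
      add_mem' := by
        rintro x ⟨β, hβ, rfl⟩ y ⟨δ, hδ, rfl⟩
        exact ⟨fun i => β i + δ i, fun i => add_nonneg (hβ i) (hδ i),
          by simp [add_smul, Finset.sum_add_distrib]⟩ }
  by_contra hc
  have hcK : c ∉ K := by
    intro hmem
    obtain ⟨β, hβ, hrep⟩ := hmem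
    exact hc ⟨β, hβ, hrep⟩
  have hne : (K : Set H).Nonempty := ⟨0, ⟨fun _ => 0, fun _ => le_rfl, by simp⟩⟩
  obtain ⟨y, hy1, hy2⟩ :=
    ProperCone.hyperplane_separation' (x₀ := c)
      ({ carrier := coneOf g
         add_mem' := fun hx hy => K.add_mem' hx hy
         zero_mem' := ⟨fun _ => 0, fun _ => le_rfl, by simp⟩
         smul_mem' := by
           rintro ⟨a, ha⟩ x ⟨β, hβ, rfl⟩
           show a • (∑ i, β i • g i) ∈ coneOf g
           exact ⟨fun i => a * β i, fun i => mul_nonneg ha (hβ i),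
             by simp [Finset.smul_sum, mul_smul]⟩
         isClosed' := isClosed_coneOf g } : ProperCone ℝ H) hcK
  have hgK : ∀ i, g i ∈ K := by
    intro i
    refine ⟨fun j => if j = i then 1 else 0, fun j => by positivity, ?_⟩
    simp [ite_smul]
  have : 0 ≤ ⟪c, y⟫ := h y (fun i => hy1 (g i) (hgK i))
  rw [real_inner_comm] at this
  linarith [real_inner_comm c y]

end Cone
section Farkas

variable {Z : Type*} [AddCommGroup Z] [Module ℝ Z]

/-- Homogeneous Farkas lemma on an arbitrary real vector space: if `F z ≥ 0` whenever all
`A i z ≤ 0`, then `-F` is a nonnegative combination of the `A i`. -/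
lemma farkas_homog {ι : Type*} [Fintype ι] (A : ι → Z →ₗ[ℝ] ℝ) (F : Z →ₗ[ℝ] ℝ)
    (h : ∀ z, (∀ i, A i z ≤ 0) → 0 ≤ F z) :
    ∃ γ : ι → ℝ, (∀ i, 0 ≤ γ i) ∧ ∀ z, F z + ∑ i, γ i * A i z = 0 := by
  classical
  let H := EuclideanSpace ℝ ι
  let Φ : Z →ₗ[ℝ] H :=
    (WithLp.linearEquiv 2 ℝ (ι → ℝ)).symm.toLinearMap ∘ₗ LinearMap.pi A
  have hΦ : ∀ z i, Φ z i = A i z := fun z i => rfl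
  have hker : LinearMap.ker Φ ≤ LinearMap.ker F := by
    intro z hz
    rw [LinearMap.mem_ker] at hz ⊢
    have hz' : ∀ i, A i z = 0 := by
      intro i
      rw [← hΦ z i, hz]
      rfl
    have h1 : 0 ≤ F z := h z (fun i => (hz' i).le)
    have h2 : 0 ≤ F (-z) := h (-z) (fun i => by simp [hz' i])
    rw [map_neg] at h2
    linarith
  set W := LinearMap.range Φ with hW
  let e := Φ.quotKerEquivRange
  let ψ : ↥W →ₗ[ℝ] ℝ := ((LinearMap.ker Φ).liftQ F hker) ∘ₗ e.symm.toLinearMap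
  have hψ : ∀ z : Z, ψ ⟨Φ z, LinearMap.mem_range_self Φ z⟩ = F z := by
    intro z
    have he : e (Submodule.Quotient.mk z) = ⟨Φ z, LinearMap.mem_range_self Φ z⟩ :=
      Subtype.ext (Φ.quotKerEquivRange_apply_mk z)
    have : e.symm ⟨Φ z, LinearMap.mem_range_self Φ z⟩ = Submodule.Quotient.mk z := by
      rw [← he, LinearEquiv.symm_apply_apply]
    simp [ψ, this, Submodule.liftQ_apply]
  -- Riesz representative of -ψ on W
  let c₀ : ↥W := (InnerProductSpace.toDual ℝ ↥W).symm ψ.toContinuousLinearMap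
  let c : H := -(c₀ : H)
  have hc : ∀ z : Z, ⟪c, Φ z⟫ = -(F z) := by
    intro z
    have : ⟪(c₀ : H), Φ z⟫ = ⟪c₀, (⟨Φ z, LinearMap.mem_range_self Φ z⟩ : ↥W)⟫ := rfl
    rw [show ⟪c, Φ z⟫ = -⟪(c₀ : H), Φ z⟫ by simp [c, inner_neg_left], this,
      InnerProductSpace.toDual_symm_apply]
    rw [show ψ.toContinuousLinearMap ⟨Φ z, LinearMap.mem_range_self Φ z⟩
        = ψ ⟨Φ z, LinearMap.mem_range_self Φ z⟩ from rfl, hψ]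
  -- generators: coordinate vectors and ± a basis of Wᗮ
  let r := Module.finrank ℝ ↥Wᗮ
  let b : Module.Basis (Fin r) ℝ ↥Wᗮ := Module.finBasis ℝ ↥Wᗮ
  let G : (ι ⊕ (Fin r × Bool)) → H :=
    Sum.elim (fun i => EuclideanSpace.single i (1 : ℝ))
      (fun jb => if jb.2 then (b jb.1 : H) else -(b jb.1 : H))
  have key : ∀ y : H, (∀ t, 0 ≤ ⟪G t, y⟫) → 0 ≤ ⟪c, y⟫ := by
    intro y hy
    have hb0 : ∀ j : Fin r, ⟪(b j : H), y⟫ = 0 := by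
      intro j
      have h1 := hy (Sum.inr (j, true))
      have h2 := hy (Sum.inr (j, false))
      simp [G, inner_neg_left] at h1 h2
      linarith
    have hyW : y ∈ W := by
      rw [← Submodule.orthogonal_orthogonal W]
      rw [Submodule.mem_orthogonal]
      intro u hu
      have : (⟨u, hu⟩ : ↥Wᗮ) = ∑ j, b.repr ⟨u, hu⟩ j • b j := (b.sum_repr ⟨u, hu⟩).symm
      have hu' : u = ∑ j, b.repr ⟨u, hu⟩ j • (b j : H) := by
        calc u = ((⟨u, hu⟩ : ↥Wᗮ) : H) := rfl
          _ = ((∑ j, b.repr ⟨u, hu⟩ j • b j : ↥Wᗮ) : H) := by rw [← this]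
          _ = ∑ j, b.repr ⟨u, hu⟩ j • (b j : H) := by push_cast; rfl
      rw [hu', sum_inner]
      simp [real_inner_smul_left, hb0]
    obtain ⟨z, hz⟩ := hyW
    have hynn : ∀ i, 0 ≤ A i z := by
      intro i
      have := hy (Sum.inl i)
      simp only [G, Sum.elim_inl] at this
      rw [EuclideanSpace.inner_single_left] at this
      simpa [← hz, hΦ z i] using this
    have hFz : F z ≤ 0 := by
      have := h (-z) (fun i => by simp [hynn i])
      rw [map_neg] at this
      linarith
    rw [← hz, hc z]
    linarith
  obtain ⟨β, hβ, hrep⟩ := mem_coneOf_of_dual G c key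
  refine ⟨fun i => β (Sum.inl i), fun i => hβ _, ?_⟩
  intro z
  have hsplit : ⟪c, Φ z⟫ = ∑ t, β t * ⟪G t, Φ z⟫ := by
    rw [hrep, sum_inner]
    exact Finset.sum_congr rfl fun t _ => real_inner_smul_left _ _ _
  have h0 : Φ z ∈ Wᗮᗮ := by
    rw [Submodule.orthogonal_orthogonal]
    exact LinearMap.mem_range_self Φ z
  have hΦzW := (Submodule.mem_orthogonal Wᗮ (Φ z)).mp h0
  have hinr : ∀ jb : Fin r × Bool, (⟪G (Sum.inr jb), Φ z⟫ : ℝ) = 0 := by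
    rintro ⟨j, bo⟩
    have hbj := hΦzW (b j : H) (b j).2
    cases bo <;> simp [G, inner_neg_left, hbj]
  have hinl : ∀ i, ⟪G (Sum.inl i), Φ z⟫ = A i z := by
    intro i
    simp only [G, Sum.elim_inl]
    rw [EuclideanSpace.inner_single_left]
    simp [hΦ z i]
  rw [hc z, Fintype.sum_sum_type] at hsplit
  simp only [hinr, mul_zero, Finset.sum_const_zero, add_zero, hinl] at hsplit
  linarith [hsplit]

end Farkas
section Affine

variable {X : Type*} [AddCommGroup X] [Module ℝ X]

/-- Affine Farkas lemma: if the consistent system `M j x ≤ w j` implies `v ≤ f x`,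
then `-f` is a nonneg combination of the `M j` with `∑ γ j * w j ≤ -v`. -/
lemma farkas_affine {J : Type*} [Fintype J]
    (M : J → X →ₗ[ℝ] ℝ) (w : J → ℝ) (f : X →ₗ[ℝ] ℝ) (v : ℝ)
    (hcons : ∃ x, ∀ j, M j x ≤ w j)
    (h : ∀ x, (∀ j, M j x ≤ w j) → v ≤ f x) :
    ∃ γ : J → ℝ, (∀ j, 0 ≤ γ j) ∧ (∀ x, f x + ∑ j, γ j * M j x = 0) ∧
      ∑ j, γ j * w j ≤ -v := by
  classical
  obtain ⟨x₀, hx₀⟩ := hcons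
  let A : Option J → (X × ℝ) →ₗ[ℝ] ℝ := fun o =>
    Option.elim o (-(LinearMap.snd ℝ X ℝ))
      (fun j => (M j).comp (LinearMap.fst ℝ X ℝ) - w j • LinearMap.snd ℝ X ℝ)
  let F : (X × ℝ) →ₗ[ℝ] ℝ := f.comp (LinearMap.fst ℝ X ℝ) - v • LinearMap.snd ℝ X ℝ
  have hyp : ∀ z : X × ℝ, (∀ o, A o z ≤ 0) → 0 ≤ F z := by
    rintro ⟨x, t⟩ hz
    have ht : 0 ≤ t := by
      have := hz none
      simp [A] at this
      linarith
    have hMj : ∀ j, M j x ≤ w j * t := by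
      intro j
      have := hz (some j)
      simp [A] at this
      linarith
    show 0 ≤ f x - v * t
    rcases eq_or_lt_of_le ht with ht0 | htpos
    · -- t = 0 : recession direction
      have hMx : ∀ j, M j x ≤ 0 := by intro j; have := hMj j; rw [← ht0] at this; linarith
      by_contra hneg
      push_neg at hneg
      have hfx : f x < 0 := by rw [← ht0] at hneg; linarith
      set s : ℝ := (f x₀ - v + 1) / (-f x) with hs
      have hspos : 0 < s := by
        apply div_pos
        · have := h x₀ hx₀; linarith
        · linarith
      have hfeas : ∀ j, M j (x₀ + s • x) ≤ w j := by
        intro j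
        rw [map_add, map_smul]
        have : s * M j x ≤ 0 := mul_nonpos_of_nonneg_of_nonpos hspos.le (hMx j)
        have := hx₀ j
        simp only [smul_eq_mul]
        linarith
      have hv := h _ hfeas
      rw [map_add, map_smul] at hv
      simp only [smul_eq_mul] at hv
      have hsx : s * f x = -(f x₀ - v + 1) := by
        rw [hs, div_mul_eq_mul_div, div_eq_iff (by linarith : -f x ≠ 0)]
        ring
      rw [hsx] at hv
      linarith
    · -- t > 0 : rescale
      have hfeas : ∀ j, M j (t⁻¹ • x) ≤ w j := by
        intro j
        rw [map_smul]
        simp only [smul_eq_mul]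
        rw [inv_mul_le_iff₀ htpos]
        linarith [hMj j]
      have hv := h _ hfeas
      rw [map_smul] at hv
      simp only [smul_eq_mul] at hv
      rw [le_inv_mul_iff₀ htpos] at hv
      linarith
  obtain ⟨γ', hγ'pos, hγ'⟩ := farkas_homog A F hyp
  refine ⟨fun j => γ' (some j), fun j => hγ'pos _, ?_, ?_⟩
  · intro x
    have := hγ' (x, 0)
    rw [Fintype.sum_option] at this
    simp [A, F] at this
    convert this using 2
  · have := hγ' (0, 1)
    rw [Fintype.sum_option] at this
    simp [A, F] at this
    have hn := hγ'pos none
    -- this : -v + (-γ' none + ∑ j, γ' (some j) * (-(w j))) = 0  (roughly)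
    have hsum : ∑ j, γ' (some j) * w j = -v - γ' none := by linarith [this]
    rw [hsum]
    linarith
end Affine

section MazurOrlicz

variable {X : Type*} [AddCommGroup X] [Module ℝ X]

/-- Mazur–Orlicz style sandwich: a linear functional below `p` which is still `≥ v` on
the convex set `C`, provided `p ≥ v` on `C`. -/
lemma mazur_orlicz (p : X → ℝ)
    (hadd : ∀ x y, p (x + y) ≤ p x + p y)
    (hhom : ∀ t : ℝ, 0 ≤ t → ∀ x, p (t • x) = t * p x)
    (C : Set X) (hC : Convex ℝ C) (x₀ : X) (hx₀ : x₀ ∈ C) (v : ℝ)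
    (hv : ∀ y ∈ C, v ≤ p y) :
    ∃ f : X →ₗ[ℝ] ℝ, (∀ x, f x ≤ p x) ∧ ∀ y ∈ C, v ≤ f y := by
  have p0 : p 0 = 0 := by
    have := hhom 0 le_rfl 0
    simpa using this
  set S : X → Set ℝ := fun x =>
    {r | ∃ t : ℝ, 0 ≤ t ∧ ∃ y ∈ C, r = p (x + t • y) - t * v} with hS
  have hmem : ∀ x, p x ∈ S x := by
    intro x
    exact ⟨0, le_rfl, x₀, hx₀, by simp⟩
  have hbdd : ∀ x, ∀ r ∈ S x, -p (-x) ≤ r := by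
    rintro x r ⟨t, ht, y, hy, rfl⟩
    have h2 : p (t • y) ≤ p (x + t • y) + p (-x) := by
      have h1 : t • y = (x + t • y) + (-x) := by abel
      calc p (t • y) = p ((x + t • y) + (-x)) := by rw [← h1]
        _ ≤ p (x + t • y) + p (-x) := hadd _ _
    have h3 : p (t • y) = t * p y := hhom t ht y
    have h4 : t * v ≤ t * p y := mul_le_mul_of_nonneg_left (hv y hy) ht
    linarith
  set q : X → ℝ := fun x => sInf (S x) with hq
  have hq_le_elem : ∀ x, ∀ r ∈ S x, q x ≤ r := fun x r hr =>
    csInf_le ⟨-p (-x), fun s hs => hbdd x s hs⟩ hr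
  have hqle : ∀ x, q x ≤ p x := fun x => hq_le_elem x _ (hmem x)
  have hsub : ∀ x y, q (x + y) ≤ q x + q y := by
    intro x y
    have key : ∀ r ∈ S x, ∀ s ∈ S y, q (x + y) ≤ r + s := by
      rintro r ⟨t1, ht1, y1, hy1, rfl⟩ s ⟨t2, ht2, y2, hy2, rfl⟩
      rcases eq_or_lt_of_le (add_nonneg ht1 ht2) with hT | hT
      · have h1 : t1 = 0 := by linarith
        have h2 : t2 = 0 := by linarith
        subst h1; subst h2
        simp only [zero_smul, add_zero, zero_mul, sub_zero]
        calc q (x + y) ≤ p (x + y) := hqle _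
          _ ≤ p x + p y := hadd x y
      · set T := t1 + t2 with hTdef
        set yy := (t1 / T) • y1 + (t2 / T) • y2 with hyy
        have hyyC : yy ∈ C := hC hy1 hy2 (div_nonneg ht1 hT.le) (div_nonneg ht2 hT.le)
          (by field_simp; exact hTdef.symm)
        have heq : (x + y) + T • yy = (x + t1 • y1) + (y + t2 • y2) := by
          rw [hyy, smul_add, smul_smul, smul_smul, mul_div_cancel₀ _ (ne_of_gt hT),
            mul_div_cancel₀ _ (ne_of_gt hT)]
          abel
        have hel : q (x + y) ≤ p ((x + y) + T • yy) - T * v :=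
          hq_le_elem _ _ ⟨T, hT.le, yy, hyyC, rfl⟩
        have hp2 : p ((x + y) + T • yy) ≤ p (x + t1 • y1) + p (y + t2 • y2) := by
          rw [heq]; exact hadd _ _
        have : T * v = t1 * v + t2 * v := by rw [hTdef]; ring
        linarith
    have h1 : ∀ s ∈ S y, ∀ r ∈ S x, q (x + y) - s ≤ r := fun s hs r hr => by
      linarith [key r hr s hs]
    have h2 : ∀ s ∈ S y, q (x + y) - q x ≤ s := fun s hs => by
      have := le_csInf ⟨_, hmem x⟩ (h1 s hs)
      linarith
    have h3 : q (x + y) - q x ≤ q y := le_csInf ⟨_, hmem y⟩ h2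
    linarith
  have hscale : ∀ c : ℝ, 0 < c → ∀ x, q (c • x) ≤ c * q x := by
    intro c hc x
    have hstep : ∀ r ∈ S x, q (c • x) ≤ c * r := by
      rintro r ⟨t, ht, y, hy, rfl⟩
      have heq : c • x + (c * t) • y = c • (x + t • y) := by
        rw [smul_add, mul_smul]
      have hel : q (c • x) ≤ p (c • x + (c * t) • y) - (c * t) * v :=
        hq_le_elem _ _ ⟨c * t, by positivity, y, hy, rfl⟩
      rw [heq, hhom c hc.le] at hel
      ring_nf at hel ⊢
      linarith
    have h2 : q (c • x) / c ≤ q x := by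
      refine le_csInf ⟨_, hmem x⟩ (fun r hr => ?_)
      rw [div_le_iff₀ hc]
      linarith [hstep r hr, mul_comm c r]
    calc q (c • x) = (q (c • x) / c) * c := by field_simp
      _ ≤ q x * c := mul_le_mul_of_nonneg_right h2 hc.le
      _ = c * q x := mul_comm _ _
  have hqhom : ∀ c : ℝ, 0 < c → ∀ x, q (c • x) = c * q x := by
    intro c hc x
    refine le_antisymm (hscale c hc x) ?_
    have := hscale c⁻¹ (by positivity) (c • x)
    rw [smul_smul, inv_mul_cancel₀ (ne_of_gt hc), one_smul] at this
    have := mul_le_mul_of_nonneg_left this hc.le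
    rw [← mul_assoc, mul_inv_cancel₀ (ne_of_gt hc), one_mul] at this
    linarith
  have hq0 : 0 ≤ q 0 := by
    refine le_csInf ⟨_, hmem 0⟩ ?_
    rintro r ⟨t, ht, y, hy, rfl⟩
    rw [zero_add, hhom t ht]
    have := mul_le_mul_of_nonneg_left (hv y hy) ht
    linarith
  have hf : ∀ x : ((0 : X →ₗ[ℝ] ℝ).toPMap ⊥).domain, ((0 : X →ₗ[ℝ] ℝ).toPMap ⊥) x ≤ q ↑x := by
    rintro ⟨x, hx⟩
    have hx0 : x = 0 := Submodule.mem_bot ℝ |>.mp hx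
    subst hx0
    simpa [LinearMap.toPMap_apply] using hq0
  obtain ⟨g, -, hgle⟩ := exists_extension_of_le_sublinear
    ((0 : X →ₗ[ℝ] ℝ).toPMap ⊥) q hqhom hsub hf
  refine ⟨g, fun x => le_trans (hgle x) (hqle x), ?_⟩
  intro y hy
  have hel : q (-y) ≤ -v := by
    have := hq_le_elem (-y) _ ⟨1, zero_le_one, y, hy, rfl⟩
    simpa [p0] using this
  have := le_trans (hgle (-y)) hel
  rw [map_neg] at this
  linarith

end MazurOrlicz

/-- A functional is sublinear if it is subadditive and positively homogeneous. -/
def IsSublinear {X : Type*} [AddCommGroup X] [Module ℝ X] (p : X → ℝ) : Prop :=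
  (∀ x y : X, p (x + y) ≤ p x + p y) ∧ ∀ (t : ℝ), 0 ≤ t → ∀ x : X, p (t • x) = t * p x

/-- A functional is polyhedral if it is the maximum of finitely many linear functionals. -/
def IsPolyhedral {X : Type*} [AddCommGroup X] [Module ℝ X] (p : X → ℝ) : Prop :=
  ∃ (m : ℕ) (L : Fin (m + 1) → (X →ₗ[ℝ] ℝ)), ∀ x : X, p x = ⨆ i, L i x

theorem stmt6 (X : Type*) [AddCommGroup X] [Module ℝ X]
    (N : ℕ) (p : X → ℝ) (P : Fin N → X → ℝ) (u : Fin N → ℝ) (v : ℝ)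
    (hp : IsSublinear p)
    (hP : ∀ k, IsSublinear (P k) ∧ IsPolyhedral (P k))
    (hcons : ∃ x : X, ∀ k, P k x ≤ u k) :
    (⋂ k, {x : X | P k x ≤ u k}) ⊆ {x : X | v ≤ p x} ↔
      ∃ α : Fin N → ℝ, (∀ k, 0 ≤ α k) ∧
        (∀ x : X, 0 ≤ p x + ∑ k, α k * P k x) ∧
        ∑ k, α k * u k ≤ -v := by
  classical
  constructor
  · -- hard direction
    intro hsub
    set C : Set X := ⋂ k, {x : X | P k x ≤ u k} with hCdef
    have hmemC : ∀ x, x ∈ C ↔ ∀ k, P k x ≤ u k := by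
      intro x; simp [hCdef, Set.mem_iInter]
    obtain ⟨x₀, hx₀⟩ := hcons
    have hx₀C : x₀ ∈ C := (hmemC x₀).mpr hx₀
    have hCconv : Convex ℝ C := by
      apply convex_iInter
      intro k
      intro x hx y hy a b ha hb hab
      have h1 : P k (a • x + b • y) ≤ P k (a • x) + P k (b • y) := (hP k).1.1 _ _
      rw [(hP k).1.2 a ha, (hP k).1.2 b hb] at h1
      have h2 : a * P k x ≤ a * u k := mul_le_mul_of_nonneg_left hx ha
      have h3 : b * P k y ≤ b * u k := mul_le_mul_of_nonneg_left hy hb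
      have : a * u k + b * u k = u k := by rw [← add_mul, hab, one_mul]
      simp only [Set.mem_setOf_eq] at *
      linarith
    -- Mazur–Orlicz: a linear functional below p that is ≥ v on C
    have hpvC : ∀ y ∈ C, v ≤ p y := fun y hy => hsub hy
    obtain ⟨f, hfp, hfC⟩ := mazur_orlicz p hp.1 hp.2 C hCconv x₀ hx₀C v hpvC
    -- polyhedral representation
    choose m L hL using fun k => (hP k).2
    have hbdd : ∀ k x, BddAbove (Set.range fun i => L k i x) :=
      fun k x => Set.Finite.bddAbove (Set.finite_range _)
    have hle : ∀ k i x, L k i x ≤ P k x := by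
      intro k i x
      rw [hL k x]
      exact le_ciSup (hbdd k x) i
    have hiff : ∀ k x, P k x ≤ u k ↔ ∀ i, L k i x ≤ u k := by
      intro k x
      constructor
      · intro h i; exact le_trans (hle k i x) h
      · intro h; rw [hL k x]; exact ciSup_le h
    -- flatten constraints
    let J := Σ k : Fin N, Fin (m k + 1)
    let M : J → X →ₗ[ℝ] ℝ := fun j => L j.1 j.2
    let w : J → ℝ := fun j => u j.1
    have hcons' : ∃ x, ∀ j : J, M j x ≤ w j :=
      ⟨x₀, fun j => (hiff j.1 x₀).mp (hx₀ j.1) j.2⟩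
    have himp : ∀ x, (∀ j : J, M j x ≤ w j) → v ≤ f x := by
      intro x hx
      apply hfC
      rw [hmemC]
      intro k
      exact (hiff k x).mpr (fun i => hx ⟨k, i⟩)
    obtain ⟨γ, hγpos, hγzero, hγsum⟩ := farkas_affine M w f v hcons' himp
    refine ⟨fun k => ∑ i, γ ⟨k, i⟩, fun k => Finset.sum_nonneg fun i _ => hγpos _, ?_, ?_⟩
    · intro x
      have h0 := hγzero x
      have hJsum : ∑ j : J, γ j * M j x = ∑ k, ∑ i, γ ⟨k, i⟩ * L k i x := by
        rw [← Finset.univ_sigma_univ, Finset.sum_sigma]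
      have hcomp : ∀ k, (∑ i, γ ⟨k, i⟩) * P k x ≥ ∑ i, γ ⟨k, i⟩ * L k i x := by
        intro k
        rw [Finset.sum_mul]
        exact Finset.sum_le_sum fun i _ => mul_le_mul_of_nonneg_left (hle k i x) (hγpos _)
      have hge : ∑ k, (∑ i, γ ⟨k, i⟩) * P k x ≥ ∑ k, ∑ i, γ ⟨k, i⟩ * L k i x :=
        Finset.sum_le_sum fun k _ => hcomp k
      have : f x + ∑ k, ∑ i, γ ⟨k, i⟩ * L k i x = 0 := by
        rw [← hJsum]; exact h0
      have hfpx := hfp x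
      linarith
    · have hJsum : ∑ j : J, γ j * w j = ∑ k, ∑ i, γ ⟨k, i⟩ * u k := by
        rw [← Finset.univ_sigma_univ, Finset.sum_sigma]
      have : ∑ k, (∑ i, γ ⟨k, i⟩) * u k = ∑ j : J, γ j * w j := by
        rw [hJsum]
        exact Finset.sum_congr rfl fun k _ => Finset.sum_mul _ _ _
      rw [this]
      exact hγsum
  · -- easy direction
    rintro ⟨α, hα, h1, h2⟩ x hx
    rw [Set.mem_iInter] at hx
    have hsum : ∑ k, α k * P k x ≤ ∑ k, α k * u k :=
      Finset.sum_le_sum fun k _ => mul_le_mul_of_nonneg_left (hx k) (hα k)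
    have := h1 x
    show v ≤ p x
    linarith
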